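/- Let R = ℤ[w,c,i,j,k]/(w²−8w, wc−4w, wi−2w, wj−2w, wk−2w, c²−4c, ci−2c, cj−2c, ck−2c, i²−2i, j²−2j, k²−2k, ij−c, ik−c, jk−c) and let S = ℤ[u,v]/(u², v², uv, 2u, 2v). The assignments w ↦ 8, c ↦ 4, i ↦ u+2, j ↦ u+v+2, k ↦ v+2 determine a well-defined surjective ring homomorphism q : R → S, and the kernel of q equals the ideal of R generated by the five elements g₁ = −2w + 3i + 3j + 3k − 2, g₂ = w − 2c, g₃ = −w + 3c − 2i, g₄ = −w + 3c − 2j, g₅ = −w + 3c − 2k. Consequently q induces a ring isomorphism R/(g₁,g₂,g₃,g₄,g₅) ≅ ℤ[u,v]/(u², v², uv, 2u, 2v). -/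
import Mathlib


open MvPolynomial

noncomputable section
set_option maxHeartbeats 1000000
set_option synthInstance.maxHeartbeats 1000000

/-- Presentation of the Burnside ring `A(Q₈)`:
variables `X 0 = w`, `X 1 = c`, `X 2 = i`, `X 3 = j`, `X 4 = k`. -/
def relR : Ideal (MvPolynomial (Fin 5) ℤ) :=
  Ideal.span {X 0 ^ 2 - 8 * X 0, X 0 * X 1 - 4 * X 0, X 0 * X 2 - 2 * X 0,
    X 0 * X 3 - 2 * X 0, X 0 * X 4 - 2 * X 0,
    X 1 ^ 2 - 4 * X 1, X 1 * X 2 - 2 * X 1, X 1 * X 3 - 2 * X 1, X 1 * X 4 - 2 * X 1,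
    X 2 ^ 2 - 2 * X 2, X 3 ^ 2 - 2 * X 3, X 4 ^ 2 - 2 * X 4,
    X 2 * X 3 - X 1, X 2 * X 4 - X 1, X 3 * X 4 - X 1}

abbrev R : Type := MvPolynomial (Fin 5) ℤ ⧸ relR

def wR : R := Ideal.Quotient.mk relR (X 0)
def cR : R := Ideal.Quotient.mk relR (X 1)
def iR : R := Ideal.Quotient.mk relR (X 2)
def jR : R := Ideal.Quotient.mk relR (X 3)
def kR : R := Ideal.Quotient.mk relR (X 4)

/-- Presentation of `S = ℤ[u,v]/(u², v², uv, 2u, 2v)`. -/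
def relS : Ideal (MvPolynomial (Fin 2) ℤ) :=
  Ideal.span {X 0 ^ 2, X 1 ^ 2, X 0 * X 1, 2 * X 0, 2 * X 1}

abbrev S : Type := MvPolynomial (Fin 2) ℤ ⧸ relS

def uS : S := Ideal.Quotient.mk relS (X 0)
def vS : S := Ideal.Quotient.mk relS (X 1)

def g1 : R := -2 * wR + 3 * iR + 3 * jR + 3 * kR - 2
def g2 : R := wR - 2 * cR
def g3 : R := -wR + 3 * cR - 2 * iR
def g4 : R := -wR + 3 * cR - 2 * jR
def g5 : R := -wR + 3 * cR - 2 * kR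

namespace Stmt0Aux

lemma hu2 : uS ^ 2 = 0 := by
  have h : Ideal.Quotient.mk relS (X 0 ^ 2) = 0 :=
    Ideal.Quotient.eq_zero_iff_mem.mpr (Ideal.subset_span (by simp))
  simpa only [map_pow, uS] using h

lemma hv2 : vS ^ 2 = 0 := by
  have h : Ideal.Quotient.mk relS (X 1 ^ 2) = 0 :=
    Ideal.Quotient.eq_zero_iff_mem.mpr (Ideal.subset_span (by simp))
  simpa only [map_pow, vS] using h

lemma huv : uS * vS = 0 := by
  have h : Ideal.Quotient.mk relS (X 0 * X 1) = 0 :=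
    Ideal.Quotient.eq_zero_iff_mem.mpr (Ideal.subset_span (by simp))
  simpa only [map_mul, uS, vS] using h

lemma h2u : 2 * uS = 0 := by
  have h : Ideal.Quotient.mk relS (2 * X 0) = 0 :=
    Ideal.Quotient.eq_zero_iff_mem.mpr (Ideal.subset_span (by simp))
  simpa only [map_mul, map_ofNat, uS] using h

lemma h2v : 2 * vS = 0 := by
  have h : Ideal.Quotient.mk relS (2 * X 1) = 0 :=
    Ideal.Quotient.eq_zero_iff_mem.mpr (Ideal.subset_span (by simp))
  simpa only [map_mul, map_ofNat, vS] using h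

def ef : Fin 5 → S := fun n =>
  if n = 0 then 8 else if n = 1 then 4 else if n = 2 then uS + 2
  else if n = 3 then uS + vS + 2 else vS + 2

def phi : MvPolynomial (Fin 5) ℤ →+* S := eval₂Hom (Int.castRingHom S) ef

lemma phiX0 : phi (X 0) = 8 := by simp [phi, ef]
lemma phiX1 : phi (X 1) = 4 := by simp [phi, ef]
lemma phiX2 : phi (X 2) = uS + 2 := by simp [phi, ef]
lemma phiX3 : phi (X 3) = uS + vS + 2 := by simp [phi, ef]
lemma phiX4 : phi (X 4) = vS + 2 := by simp [phi, ef]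

lemma relR_le : relR ≤ RingHom.ker phi := by
  rw [relR, Ideal.span_le]
  rintro p hp
  simp only [Set.mem_insert_iff, Set.mem_singleton_iff] at hp
  rcases hp with rfl|rfl|rfl|rfl|rfl|rfl|rfl|rfl|rfl|rfl|rfl|rfl|rfl|rfl|rfl
  all_goals
    simp only [SetLike.mem_coe, RingHom.mem_ker, map_sub, map_mul, map_pow, map_ofNat,
      phiX0, phiX1, phiX2, phiX3, phiX4]
  · linear_combination (0 : S)
  · linear_combination (0 : S)
  · linear_combination 4 * h2u
  · linear_combination 4 * h2u + 4 * h2v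
  · linear_combination 4 * h2v
  · linear_combination (0 : S)
  · linear_combination 2 * h2u
  · linear_combination 2 * h2u + 2 * h2v
  · linear_combination 2 * h2v
  · linear_combination hu2 + h2u
  · linear_combination hu2 + hv2 + 2 * huv + h2u + h2v
  · linear_combination hv2 + h2v
  · linear_combination hu2 + huv + 2 * h2u + h2v
  · linear_combination huv + h2u + h2v
  · linear_combination huv + hv2 + h2u + 2 * h2v

lemma relR_le_ker : ∀ a ∈ relR, phi a = 0 := fun a ha => RingHom.mem_ker.mp (relR_le ha)

def q0 : R →+* S := Ideal.Quotient.lift relR phi relR_le_ker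

lemma q0w : q0 wR = 8 := by
  show Ideal.Quotient.lift relR phi relR_le_ker (Ideal.Quotient.mk relR (X 0)) = 8
  rw [Ideal.Quotient.lift_mk]; exact phiX0

lemma q0c : q0 cR = 4 := by
  show Ideal.Quotient.lift relR phi relR_le_ker (Ideal.Quotient.mk relR (X 1)) = 4
  rw [Ideal.Quotient.lift_mk]; exact phiX1

lemma q0i : q0 iR = uS + 2 := by
  show Ideal.Quotient.lift relR phi relR_le_ker (Ideal.Quotient.mk relR (X 2)) = uS + 2
  rw [Ideal.Quotient.lift_mk]; exact phiX2

lemma q0j : q0 jR = uS + vS + 2 := by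
  show Ideal.Quotient.lift relR phi relR_le_ker (Ideal.Quotient.mk relR (X 3)) = uS + vS + 2
  rw [Ideal.Quotient.lift_mk]; exact phiX3

lemma q0k : q0 kR = vS + 2 := by
  show Ideal.Quotient.lift relR phi relR_le_ker (Ideal.Quotient.mk relR (X 4)) = vS + 2
  rw [Ideal.Quotient.lift_mk]; exact phiX4

/-- Any ring hom with the prescribed values equals `q0`. -/
lemma q_eq (q : R →+* S) (hw : q wR = 8) (hc : q cR = 4) (hi : q iR = uS + 2)
    (hj : q jR = uS + vS + 2) (hk : q kR = vS + 2) : q = q0 := by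
  apply Ideal.Quotient.ringHom_ext
  apply MvPolynomial.ringHom_ext
  · intro r
    simp only [RingHom.comp_apply]
    rw [show (C r : MvPolynomial (Fin 5) ℤ) = (r : MvPolynomial (Fin 5) ℤ) from
      eq_intCast (C : ℤ →+* MvPolynomial (Fin 5) ℤ) r]
    simp only [map_intCast]
  · intro n
    fin_cases n <;> simp only [RingHom.comp_apply]
    · exact (show q wR = q0 wR from hw.trans q0w.symm)
    · exact (show q cR = q0 cR from hc.trans q0c.symm)
    · exact (show q iR = q0 iR from hi.trans q0i.symm)
    · exact (show q jR = q0 jR from hj.trans q0j.symm)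
    · exact (show q kR = q0 kR from hk.trans q0k.symm)

/-- Surjectivity of `q0` via an explicit polynomial-level section. -/
def theta : MvPolynomial (Fin 2) ℤ →+* R :=
  eval₂Hom (Int.castRingHom R) (fun n => if n = 0 then iR - 2 else kR - 2)

lemma q0_theta : q0.comp theta = Ideal.Quotient.mk relS := by
  apply MvPolynomial.ringHom_ext
  · intro r
    simp only [RingHom.comp_apply]
    rw [show (C r : MvPolynomial (Fin 2) ℤ) = (r : MvPolynomial (Fin 2) ℤ) from
      eq_intCast (C : ℤ →+* MvPolynomial (Fin 2) ℤ) r]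
    simp only [map_intCast]
  · intro n
    fin_cases n <;> simp only [RingHom.comp_apply]
    · show q0 (theta (X 0)) = Ideal.Quotient.mk relS (X 0)
      rw [show theta (X 0) = iR - 2 from by simp [theta], map_sub, q0i, map_ofNat]
      show uS + 2 - 2 = uS
      ring
    · show q0 (theta (X 1)) = Ideal.Quotient.mk relS (X 1)
      rw [show theta (X 1) = kR - 2 from by simp [theta], map_sub, q0k, map_ofNat]
      show vS + 2 - 2 = vS
      ring

lemma q0_surj : Function.Surjective q0 := by
  intro s
  obtain ⟨p, rfl⟩ := Ideal.Quotient.mk_surjective s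
  exact ⟨theta p, by rw [← q0_theta]; rfl⟩

/-! ### The quotient `T = R / (g1,...,g5)` -/

abbrev gIdeal : Ideal R := Ideal.span {g1, g2, g3, g4, g5}
abbrev T : Type := R ⧸ gIdeal

abbrev tw : T := Ideal.Quotient.mk gIdeal wR
abbrev tc : T := Ideal.Quotient.mk gIdeal cR
abbrev ti : T := Ideal.Quotient.mk gIdeal iR
abbrev tj : T := Ideal.Quotient.mk gIdeal jR
abbrev tk : T := Ideal.Quotient.mk gIdeal kR

lemma hg1T : -2 * tw + 3 * ti + 3 * tj + 3 * tk - 2 = 0 := by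
  have h : Ideal.Quotient.mk gIdeal g1 = 0 :=
    Ideal.Quotient.eq_zero_iff_mem.mpr (Ideal.subset_span (by simp))
  simpa only [g1, map_add, map_sub, map_mul, map_neg, map_ofNat] using h

lemma hg2T : tw - 2 * tc = 0 := by
  have h : Ideal.Quotient.mk gIdeal g2 = 0 :=
    Ideal.Quotient.eq_zero_iff_mem.mpr (Ideal.subset_span (by simp))
  simpa only [g2, map_add, map_sub, map_mul, map_neg, map_ofNat] using h

lemma hg3T : -tw + 3 * tc - 2 * ti = 0 := by
  have h : Ideal.Quotient.mk gIdeal g3 = 0 :=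
    Ideal.Quotient.eq_zero_iff_mem.mpr (Ideal.subset_span (by simp))
  simpa only [g3, map_add, map_sub, map_mul, map_neg, map_ofNat] using h

lemma hg4T : -tw + 3 * tc - 2 * tj = 0 := by
  have h : Ideal.Quotient.mk gIdeal g4 = 0 :=
    Ideal.Quotient.eq_zero_iff_mem.mpr (Ideal.subset_span (by simp))
  simpa only [g4, map_add, map_sub, map_mul, map_neg, map_ofNat] using h

lemma hg5T : -tw + 3 * tc - 2 * tk = 0 := by
  have h : Ideal.Quotient.mk gIdeal g5 = 0 :=
    Ideal.Quotient.eq_zero_iff_mem.mpr (Ideal.subset_span (by simp))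
  simpa only [g5, map_add, map_sub, map_mul, map_neg, map_ofNat] using h

lemma hikR : iR * kR = cR := by
  have h : Ideal.Quotient.mk relR (X 2 * X 4) = Ideal.Quotient.mk relR (X 1) :=
    Ideal.Quotient.eq.mpr (Ideal.subset_span (by simp))
  simpa only [map_mul, iR, kR, cR] using h

lemma hi2R : iR ^ 2 = 2 * iR := by
  have h : Ideal.Quotient.mk relR (X 2 ^ 2) = Ideal.Quotient.mk relR (2 * X 2) :=
    Ideal.Quotient.eq.mpr (Ideal.subset_span (by simp))
  simpa only [map_pow, map_mul, map_ofNat, iR] using h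

lemma hk2R : kR ^ 2 = 2 * kR := by
  have h : Ideal.Quotient.mk relR (X 4 ^ 2) = Ideal.Quotient.mk relR (2 * X 4) :=
    Ideal.Quotient.eq.mpr (Ideal.subset_span (by simp))
  simpa only [map_pow, map_mul, map_ofNat, kR] using h

lemma hikT : ti * tk = tc := by
  simpa only [map_mul] using congrArg (Ideal.Quotient.mk gIdeal) hikR

lemma hi2T : ti ^ 2 = 2 * ti := by
  simpa only [map_pow, map_mul, map_ofNat] using congrArg (Ideal.Quotient.mk gIdeal) hi2R

lemma hk2T : tk ^ 2 = 2 * tk := by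
  simpa only [map_pow, map_mul, map_ofNat] using congrArg (Ideal.Quotient.mk gIdeal) hk2R

lemma lc4 : tc = 4 := by
  linear_combination 2 * hg1T + 13 * hg2T + 3 * hg3T + 3 * hg4T + 3 * hg5T

lemma lw8 : tw = 8 := by linear_combination hg2T + 2 * lc4

lemma l2i : 2 * ti = 4 := by linear_combination -hg3T - hg2T + lc4

lemma l2k : 2 * tk = 4 := by linear_combination -hg5T - hg2T + lc4

lemma lj : tj = ti + tk - 2 := by
  linear_combination -hg1T - 6 * hg2T - hg3T - 2 * hg4T - hg5T

lemma la2 : (ti - 2) ^ 2 = 0 := by linear_combination hi2T - l2i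

lemma lb2 : (tk - 2) ^ 2 = 0 := by linear_combination hk2T - l2k

lemma lab : (ti - 2) * (tk - 2) = 0 := by linear_combination hikT - l2i - l2k + lc4

lemma l2a : 2 * (ti - 2) = 0 := by linear_combination l2i

lemma l2b : 2 * (tk - 2) = 0 := by linear_combination l2k

def psi0 : MvPolynomial (Fin 2) ℤ →+* T :=
  eval₂Hom (Int.castRingHom T) (fun n => if n = 0 then ti - 2 else tk - 2)

lemma psi0X0 : psi0 (X 0) = ti - 2 := by simp [psi0]
lemma psi0X1 : psi0 (X 1) = tk - 2 := by simp [psi0]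

lemma relS_le : relS ≤ RingHom.ker psi0 := by
  rw [relS, Ideal.span_le]
  rintro p hp
  simp only [Set.mem_insert_iff, Set.mem_singleton_iff] at hp
  rcases hp with rfl|rfl|rfl|rfl|rfl
  all_goals
    simp only [SetLike.mem_coe, RingHom.mem_ker, map_mul, map_pow, map_ofNat, psi0X0, psi0X1]
  · exact la2
  · exact lb2
  · exact lab
  · exact l2a
  · exact l2b

lemma relS_le_ker : ∀ a ∈ relS, psi0 a = 0 := fun a ha => RingHom.mem_ker.mp (relS_le ha)

def psi : S →+* T := Ideal.Quotient.lift relS psi0 relS_le_ker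

lemma psi_u : psi uS = ti - 2 := by
  show Ideal.Quotient.lift relS psi0 relS_le_ker (Ideal.Quotient.mk relS (X 0)) = ti - 2
  rw [Ideal.Quotient.lift_mk]; exact psi0X0

lemma psi_v : psi vS = tk - 2 := by
  show Ideal.Quotient.lift relS psi0 relS_le_ker (Ideal.Quotient.mk relS (X 1)) = tk - 2
  rw [Ideal.Quotient.lift_mk]; exact psi0X1

lemma gIdeal_le : gIdeal ≤ RingHom.ker q0 := by
  rw [gIdeal, Ideal.span_le]
  rintro p hp
  simp only [Set.mem_insert_iff, Set.mem_singleton_iff] at hp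
  rcases hp with rfl|rfl|rfl|rfl|rfl
  all_goals
    simp only [SetLike.mem_coe, RingHom.mem_ker, g1, g2, g3, g4, g5, map_add, map_sub,
      map_mul, map_neg, map_ofNat, q0w, q0c, q0i, q0j, q0k]
  · linear_combination 3 * h2u + 3 * h2v
  · linear_combination (0 : S)
  · linear_combination -h2u
  · linear_combination -h2u - h2v
  · linear_combination -h2v

lemma gIdeal_le_ker : ∀ a ∈ gIdeal, q0 a = 0 := fun a ha => RingHom.mem_ker.mp (gIdeal_le ha)

def qbar : T →+* S := Ideal.Quotient.lift gIdeal q0 gIdeal_le_ker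

lemma qbar_pi (r : R) : qbar (Ideal.Quotient.mk gIdeal r) = q0 r :=
  Ideal.Quotient.lift_mk gIdeal q0 gIdeal_le_ker

lemma psi_qbar : psi.comp qbar = RingHom.id T := by
  apply Ideal.Quotient.ringHom_ext
  apply Ideal.Quotient.ringHom_ext
  apply MvPolynomial.ringHom_ext
  · intro r
    simp only [RingHom.comp_apply, RingHom.id_apply]
    rw [show (C r : MvPolynomial (Fin 5) ℤ) = (r : MvPolynomial (Fin 5) ℤ) from
      eq_intCast (C : ℤ →+* MvPolynomial (Fin 5) ℤ) r]
    simp only [map_intCast]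
  · intro n
    fin_cases n <;> simp only [RingHom.comp_apply, RingHom.id_apply]
    · show psi (qbar (Ideal.Quotient.mk gIdeal wR)) = tw
      rw [qbar_pi, q0w, map_ofNat]
      exact lw8.symm
    · show psi (qbar (Ideal.Quotient.mk gIdeal cR)) = tc
      rw [qbar_pi, q0c, map_ofNat]
      exact lc4.symm
    · show psi (qbar (Ideal.Quotient.mk gIdeal iR)) = ti
      rw [qbar_pi, q0i, map_add, map_ofNat, psi_u]
      ring
    · show psi (qbar (Ideal.Quotient.mk gIdeal jR)) = tj
      rw [qbar_pi, q0j, map_add, map_add, map_ofNat, psi_u, psi_v]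
      linear_combination -lj
    · show psi (qbar (Ideal.Quotient.mk gIdeal kR)) = tk
      rw [qbar_pi, q0k, map_add, map_ofNat, psi_v]
      ring

lemma ker_eq : RingHom.ker q0 = Ideal.span {g1, g2, g3, g4, g5} := by
  refine le_antisymm ?_ gIdeal_le
  intro x hx
  have h0 : q0 x = 0 := RingHom.mem_ker.mp hx
  have h1 := RingHom.congr_fun psi_qbar (Ideal.Quotient.mk gIdeal x)
  rw [RingHom.comp_apply, RingHom.id_apply, qbar_pi, h0, map_zero] at h1
  exact Ideal.Quotient.eq_zero_iff_mem.mp h1.symm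

end Stmt0Aux

open Stmt0Aux in
theorem stmt0 :
    (∃ q : R →+* S,
      q wR = 8 ∧ q cR = 4 ∧ q iR = uS + 2 ∧ q jR = uS + vS + 2 ∧ q kR = vS + 2) ∧
    (∀ q : R →+* S,
      (q wR = 8 ∧ q cR = 4 ∧ q iR = uS + 2 ∧ q jR = uS + vS + 2 ∧ q kR = vS + 2) →
        Function.Surjective q ∧
        RingHom.ker q = Ideal.span {g1, g2, g3, g4, g5}) ∧
    Nonempty ((R ⧸ Ideal.span {g1, g2, g3, g4, g5}) ≃+* S) := by
  refine ⟨⟨q0, q0w, q0c, q0i, q0j, q0k⟩, ?_, ?_⟩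
  · rintro q ⟨hw, hc, hi, hj, hk⟩
    have hq : q = q0 := q_eq q hw hc hi hj hk
    subst hq
    exact ⟨q0_surj, ker_eq⟩
  · exact ⟨(Ideal.quotEquivOfEq ker_eq.symm).trans (RingHom.quotientKerEquivOfSurjective q0_surj)⟩
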